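/- Let R be a ℚ-algebra, H, H' free R-modules of finite rank, and (H⊗R[[t_I,u]], ∇), (H'⊗R[[t_J,u]], ∇') finite-rank (T)-structures admitting framings, with I, J finite. Let (f,Φ) be a morphism of (T)-structures such that Φ|_{t_I=0} is an isomorphism. Then Φ is uniquely determined by its restriction Φ|_{t_I=0}: any two morphisms (f,Φ₁), (f,Φ₂) over the same base map f with Φ₁|_{t_I=0} = Φ₂|_{t_I=0} are equal. -/

import Mathlib

/-!
A morphism of framed finite-rank (T)-structures is uniquely determined by its restriction
to `t = 0`.  In framing trivializations, a morphism over a base map `f` is a matrix `Φ`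
over `R[[t₁,…,t_a,u]]` (with `u` the last of the `a+1` variables) intertwining the framed
connection matrices: `u ∂_{t_i}Φ + T'_i Φ = Φ T_i`, where `T_i` (resp. `T'_i`, the matrices
of the `f`-pullback connection) are `u`-independent (framed).  If two such morphisms over
the same base map agree at `t = 0`, they are equal.
-/

noncomputable section

open MvPowerSeries

/-- The formal partial derivative of a multivariate formal power series in the `i`-th
variable, defined coefficientwise. -/
def fpderiv {m : ℕ} {A : Type*} [Ring A] (i : Fin m) (f : MvPowerSeries (Fin m) A) :
    MvPowerSeries (Fin m) A :=
  fun k => ((k i : ℕ) + 1) • f (k + Finsupp.single i 1)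

open Finsupp in
lemma coeff_X_mul_of_ne {m : ℕ} {R : Type*} [CommRing R] (s : Fin m)
    (f : MvPowerSeries (Fin m) R) (k : Fin m →₀ ℕ) (hk : k s ≠ 0) :
    (coeff k) (X s * f) = coeff (k - single s 1) f := by
  classical
  rw [coeff_mul]
  have hle : single s 1 ≤ k := single_le_iff.mpr (Nat.one_le_iff_ne_zero.mpr hk)
  rw [Finset.sum_eq_single (single s 1, k - single s 1)]
  · rw [coeff_X, if_pos rfl, one_mul]
  · rintro ⟨l1, l2⟩ hmem hne
    rw [coeff_X]
    split_ifs with h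
    · exfalso
      apply hne
      rw [Finset.HasAntidiagonal.mem_antidiagonal] at hmem
      simp only at h
      subst h
      have h2 : l2 = k - single s 1 := eq_tsub_of_add_eq (by rw [add_comm]; exact hmem)
      rw [h2]
    · exact zero_mul _
  · intro h
    exact absurd (Finset.HasAntidiagonal.mem_antidiagonal.mpr (add_tsub_cancel_of_le hle)) h

theorem stmt18 {a N N' : ℕ} {R : Type*} [CommRing R] [Algebra ℚ R]
    (T : Fin a → Matrix (Fin N) (Fin N) (MvPowerSeries (Fin (a + 1)) R))
    (T' : Fin a → Matrix (Fin N') (Fin N') (MvPowerSeries (Fin (a + 1)) R))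
    -- framing: the connection matrices are independent of `u`
    (hT : ∀ (i : Fin a) (p q : Fin N) (k : Fin (a + 1) →₀ ℕ),
      k (Fin.last a) ≠ 0 → T i p q k = 0)
    (hT' : ∀ (i : Fin a) (p q : Fin N') (k : Fin (a + 1) →₀ ℕ),
      k (Fin.last a) ≠ 0 → T' i p q k = 0)
    (Φ₁ Φ₂ : Matrix (Fin N') (Fin N) (MvPowerSeries (Fin (a + 1)) R))
    -- both intertwine the connections: `u ∂_{t_i}Φ + T'_i Φ = Φ T_i`
    (h1 : ∀ i : Fin a,
      (X (Fin.last a) : MvPowerSeries (Fin (a + 1)) R) • (Φ₁.map (fpderiv i.castSucc))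
        + T' i * Φ₁ = Φ₁ * T i)
    (h2 : ∀ i : Fin a,
      (X (Fin.last a) : MvPowerSeries (Fin (a + 1)) R) • (Φ₂.map (fpderiv i.castSucc))
        + T' i * Φ₂ = Φ₂ * T i)
    -- they agree at `t = 0`
    (hres : ∀ (p : Fin N') (q : Fin N) (k : Fin (a + 1) →₀ ℕ),
      (∀ i : Fin a, k i.castSucc = 0) → Φ₁ p q k = Φ₂ p q k) :
    Φ₁ = Φ₂ := by
  classical
  suffices h : ∀ n (k : Fin (a + 1) →₀ ℕ), (∑ i : Fin a, k i.castSucc) = n →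
      ∀ p q, Φ₁ p q k = Φ₂ p q k by
    ext p q l
    exact h _ l rfl p q
  intro n
  induction n using Nat.strong_induction_on with
  | _ n IH =>
  intro k hk p q
  rcases Nat.eq_zero_or_pos n with h0 | hpos
  · apply hres
    intro j
    subst h0
    exact Finset.sum_eq_zero_iff.mp hk j (Finset.mem_univ j)
  · obtain ⟨i, hi⟩ : ∃ i : Fin a, k i.castSucc ≠ 0 := by
      by_contra hc
      push_neg at hc
      simp only [hc, Finset.sum_const_zero] at hk
      omega
    have hne : i.castSucc ≠ Fin.last a := (Fin.castSucc_lt_last i).ne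
    set e : Fin (a + 1) →₀ ℕ := Finsupp.single i.castSucc 1 with he
    set k' : Fin (a + 1) →₀ ℕ := k - e + Finsupp.single (Fin.last a) 1 with hk'
    have hk'u : k' (Fin.last a) ≠ 0 := by
      simp [hk', Finsupp.add_apply, Finsupp.single_eq_same]
    have hsub : k' - Finsupp.single (Fin.last a) 1 = k - e :=
      add_tsub_cancel_right _ _
    have hle : e ≤ k := Finsupp.single_le_iff.mpr (Nat.one_le_iff_ne_zero.mpr hi)
    have hadd : (k - e) + e = k := tsub_add_cancel_of_le hle
    have hval : (k - e) i.castSucc + 1 = k i.castSucc := by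
      rw [Finsupp.tsub_apply, he, Finsupp.single_eq_same]
      omega
    -- t-degree of k' is n - 1
    have hcompat : ∀ j : Fin a, k' j.castSucc + e j.castSucc = k j.castSucc := by
      intro j
      have hlast : (Finsupp.single (Fin.last a) 1 : Fin (a + 1) →₀ ℕ) j.castSucc = 0 :=
        Finsupp.single_eq_of_ne' (Ne.symm (Fin.castSucc_lt_last j).ne)
      rw [hk', Finsupp.add_apply, hlast, add_zero, Finsupp.tsub_apply]
      have : e j.castSucc ≤ k j.castSucc := by
        rcases eq_or_ne j i with rfl | hji
        · rw [he, Finsupp.single_eq_same]; omega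
        · rw [he, Finsupp.single_eq_of_ne' (fun hcc => hji (Fin.castSucc_injective a hcc).symm)]
          omega
      omega
    have hesum : ∑ j : Fin a, e j.castSucc = 1 := by
      rw [Finset.sum_eq_single i]
      · rw [he, Finsupp.single_eq_same]
      · intro j _ hji
        exact Finsupp.single_eq_of_ne' (fun hcc => hji (Fin.castSucc_injective a hcc).symm)
      · intro hni; exact absurd (Finset.mem_univ i) hni
    have hk'sum : (∑ j : Fin a, k' j.castSucc) + 1 = n := by
      calc (∑ j : Fin a, k' j.castSucc) + 1
          = (∑ j : Fin a, k' j.castSucc) + ∑ j : Fin a, e j.castSucc := by rw [hesum]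
        _ = ∑ j : Fin a, (k' j.castSucc + e j.castSucc) := by
            rw [Finset.sum_add_distrib]
        _ = ∑ j : Fin a, k j.castSucc := by
            exact Finset.sum_congr rfl fun j _ => hcompat j
        _ = n := hk
    -- any exponent ≤ k' has t-degree < n
    have hIH : ∀ (l : Fin (a + 1) →₀ ℕ), (∀ j, l j ≤ k' j) →
        ∀ p' q', Φ₁ p' q' l = Φ₂ p' q' l := by
      intro l hl p' q'
      refine IH (∑ j : Fin a, l j.castSucc) ?_ l rfl p' q'
      have : ∑ j : Fin a, l j.castSucc ≤ ∑ j : Fin a, k' j.castSucc :=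
        Finset.sum_le_sum fun j _ => hl j.castSucc
      omega
    -- the product terms agree
    have hTeq : coeff k' ((Φ₁ * T i) p q) = coeff k' ((Φ₂ * T i) p q) := by
      simp only [Matrix.mul_apply, map_sum, coeff_mul]
      refine Finset.sum_congr rfl fun r _ => Finset.sum_congr rfl ?_
      rintro ⟨l1, l2⟩ hmem
      rw [Finset.HasAntidiagonal.mem_antidiagonal] at hmem
      have hl1 : ∀ j, l1 j ≤ k' j := fun j => by
        have := DFunLike.congr_fun hmem j
        simp only [Finsupp.add_apply] at this
        omega
      simp only at hmem ⊢
      congr 1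
      exact hIH l1 hl1 p r
    have hT'eq : coeff k' ((T' i * Φ₁) p q) = coeff k' ((T' i * Φ₂) p q) := by
      simp only [Matrix.mul_apply, map_sum, coeff_mul]
      refine Finset.sum_congr rfl fun r _ => Finset.sum_congr rfl ?_
      rintro ⟨l1, l2⟩ hmem
      rw [Finset.HasAntidiagonal.mem_antidiagonal] at hmem
      have hl2 : ∀ j, l2 j ≤ k' j := fun j => by
        have := DFunLike.congr_fun hmem j
        simp only [Finsupp.add_apply] at this
        omega
      simp only at hmem ⊢
      congr 1
      exact hIH l2 hl2 r q
    -- extract the key coefficient identity from the connection equation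
    have main : ∀ Φ : Matrix (Fin N') (Fin N) (MvPowerSeries (Fin (a + 1)) R),
        ((X (Fin.last a) : MvPowerSeries (Fin (a + 1)) R) • (Φ.map (fpderiv i.castSucc))
          + T' i * Φ = Φ * T i) →
        (k i.castSucc) • Φ p q k
          = coeff k' ((Φ * T i) p q) - coeff k' ((T' i * Φ) p q) := by
      intro Φ hΦ
      have e1 := congrArg (fun M => coeff k' (M p q)) hΦ
      simp only [Matrix.add_apply, Matrix.smul_apply, smul_eq_mul, Matrix.map_apply,
        map_add] at e1
      rw [coeff_X_mul_of_ne _ _ _ hk'u, hsub] at e1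
      have hfp : coeff (k - e) (fpderiv i.castSucc (Φ p q)) = (k i.castSucc) • Φ p q k := by
        rw [coeff_apply]
        show ((k - e) i.castSucc + 1) • Φ p q ((k - e) + e) = (k i.castSucc) • Φ p q k
        rw [hval, hadd]
      rw [hfp] at e1
      exact eq_sub_of_add_eq e1
    have m1 := main Φ₁ (h1 i)
    have m2 := main Φ₂ (h2 i)
    rw [hTeq, hT'eq, ← m2] at m1
    -- cancel the nonzero natural number scalar over ℚ
    have mq : (k i.castSucc : ℚ) • Φ₁ p q k = (k i.castSucc : ℚ) • Φ₂ p q k := by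
      rw [Nat.cast_smul_eq_nsmul, Nat.cast_smul_eq_nsmul]
      exact m1
    have hcq : (k i.castSucc : ℚ) ≠ 0 := Nat.cast_ne_zero.mpr hi
    calc Φ₁ p q k = (k i.castSucc : ℚ)⁻¹ • ((k i.castSucc : ℚ) • Φ₁ p q k) :=
          (inv_smul_smul₀ hcq _).symm
      _ = (k i.castSucc : ℚ)⁻¹ • ((k i.castSucc : ℚ) • Φ₂ p q k) := by rw [mq]
      _ = Φ₂ p q k := inv_smul_smul₀ hcq _
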